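/- Let E_{k−1}, E_k, M_1,...,M_k, Z_1,...,Z_k be random variables with values in finite sets on a common probability space, with k ≥ 2. Write M^j = (M_1,...,M_j) and Z^j = (Z_1,...,Z_j). If the chaining Markov condition I((M^{k−1}, Z^{k−1}); (M_k, E_k, Z_k) | E_{k−1}) = 0 holds, then I(M^k; (Z^k, E_k)) ≤ I(M^{k−1}; (Z^{k−1}, E_{k−1})) + I(M_k; (E_k, Z_k)) + I(E_{k−1}; (M^{k−1}, Z^{k−1})). -/

import Mathlib

open Finset

/-- Probability that the random variable `X` takes the value `a`, under the
probability mass function `p` on the finite sample space `Ω`. -/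
noncomputable def probOf {Ω α : Type*} [Fintype Ω] [Fintype α] [DecidableEq α]
    (p : Ω → ℝ) (X : Ω → α) (a : α) : ℝ :=
  ∑ ω, if X ω = a then p ω else 0

/-- Shannon entropy (base 2) of the random variable `X`. -/
noncomputable def entropy {Ω α : Type*} [Fintype Ω] [Fintype α] [DecidableEq α]
    (p : Ω → ℝ) (X : Ω → α) : ℝ :=
  -∑ a, probOf p X a * Real.logb 2 (probOf p X a)

/-- Conditional entropy `H(X|Y)` (base 2). -/
noncomputable def condEntropy {Ω α β : Type*} [Fintype Ω] [Fintype α] [Fintype β]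
    [DecidableEq α] [DecidableEq β] (p : Ω → ℝ) (X : Ω → α) (Y : Ω → β) : ℝ :=
  entropy p (fun ω => (X ω, Y ω)) - entropy p Y

/-- Mutual information `I(X;Y)` (base 2). -/
noncomputable def mutualInfo {Ω α β : Type*} [Fintype Ω] [Fintype α] [Fintype β]
    [DecidableEq α] [DecidableEq β] (p : Ω → ℝ) (X : Ω → α) (Y : Ω → β) : ℝ :=
  entropy p X + entropy p Y - entropy p (fun ω => (X ω, Y ω))

/-- Conditional mutual information `I(X;Y|Z)` (base 2). -/
noncomputable def condMutualInfo {Ω α β γ : Type*} [Fintype Ω] [Fintype α] [Fintype β]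
    [Fintype γ] [DecidableEq α] [DecidableEq β] [DecidableEq γ]
    (p : Ω → ℝ) (X : Ω → α) (Y : Ω → β) (Z : Ω → γ) : ℝ :=
  entropy p (fun ω => (X ω, Z ω)) + entropy p (fun ω => (Y ω, Z ω))
    - entropy p (fun ω => (X ω, Y ω, Z ω)) - entropy p Z


section Basic
variable {Ω α β : Type*} [Fintype Ω] [Fintype α] [Fintype β] [DecidableEq α] [DecidableEq β]

lemma probOf_nonneg (p : Ω → ℝ) (hp : ∀ ω, 0 ≤ p ω) (X : Ω → α) (a : α) :
    0 ≤ probOf p X a := by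
  refine Finset.sum_nonneg fun ω _ => ?_
  split <;> simp [hp ω]

lemma sum_probOf (p : Ω → ℝ) (X : Ω → α) : ∑ a, probOf p X a = ∑ ω, p ω := by
  unfold probOf
  rw [Finset.sum_comm]
  simp

lemma probOf_comp (p : Ω → ℝ) (X : Ω → α) (f : α → β) (b : β) :
    probOf p (fun ω => f (X ω)) b
      = ∑ a ∈ Finset.univ.filter (fun a => f a = b), probOf p X a := by
  unfold probOf
  symm
  calc (∑ a ∈ Finset.univ.filter (fun a => f a = b), ∑ ω, if X ω = a then p ω else 0)
      = ∑ a, ∑ ω, if f a = b then (if X ω = a then p ω else 0) else 0 := by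
        rw [Finset.sum_filter]
        refine Finset.sum_congr rfl fun a _ => ?_
        split_ifs with h
        · rfl
        · simp
    _ = ∑ ω, ∑ a, if f a = b then (if X ω = a then p ω else 0) else 0 := Finset.sum_comm
    _ = ∑ ω, if f (X ω) = b then p ω else 0 := by
        refine Finset.sum_congr rfl fun ω _ => ?_
        have hsw : ∀ a : α, (if f a = b then (if X ω = a then p ω else 0) else 0)
            = (if X ω = a then (if f a = b then p ω else 0) else 0) := by
          intro a; by_cases h1 : f a = b <;> by_cases h2 : X ω = a <;> simp [h1, h2]
        rw [Finset.sum_congr rfl fun a _ => hsw a,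
          Finset.sum_ite_eq Finset.univ (X ω) (fun a => if f a = b then p ω else 0)]
        simp

lemma sum_probOf_comp_mul (p : Ω → ℝ) (X : Ω → α) (f : α → β) (F : β → ℝ) :
    ∑ b, probOf p (fun ω => f (X ω)) b * F b = ∑ a, probOf p X a * F (f a) := by
  calc ∑ b, probOf p (fun ω => f (X ω)) b * F b
      = ∑ b, ∑ a ∈ Finset.univ.filter (fun a => f a = b), probOf p X a * F (f a) := by
        refine Finset.sum_congr rfl fun b _ => ?_
        rw [probOf_comp, Finset.sum_mul]
        refine Finset.sum_congr rfl fun a ha => ?_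
        rw [(Finset.mem_filter.1 ha).2]
    _ = ∑ a, probOf p X a * F (f a) :=
        Finset.sum_fiberwise_of_maps_to (fun a _ => Finset.mem_univ (f a)) _

lemma probOf_comp_inj (p : Ω → ℝ) (X : Ω → α) (f : α → β) (hf : Function.Injective f) (a : α) :
    probOf p (fun ω => f (X ω)) (f a) = probOf p X a := by
  rw [probOf_comp]
  have : Finset.univ.filter (fun a' => f a' = f a) = {a} := by
    ext a'; simp [hf.eq_iff]
  rw [this, Finset.sum_singleton]

lemma entropy_comp (p : Ω → ℝ) (X : Ω → α) (f : α → β) (hf : Function.Injective f) :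
    entropy p (fun ω => f (X ω)) = entropy p X := by
  unfold entropy
  congr 1
  rw [sum_probOf_comp_mul p X f (fun b => Real.logb 2 (probOf p (fun ω => f (X ω)) b))]
  refine Finset.sum_congr rfl fun a _ => ?_
  rw [probOf_comp_inj p X f hf]

lemma entropy_congr (p : Ω → ℝ) {X : Ω → α} {X' : Ω → β} (f : α → β)
    (hf : Function.Injective f) (h : ∀ ω, X' ω = f (X ω)) :
    entropy p X' = entropy p X := by
  have : X' = fun ω => f (X ω) := funext h
  rw [this, entropy_comp p X f hf]

end Basic
section Core


lemma sum4 {ι : Type*} [Fintype ι] (f g h k : ι → ℝ) :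
    (-∑ x, f x) + (-∑ x, g x) - (-∑ x, h x) - (-∑ x, k x)
      = ∑ x, (h x + k x - f x - g x) := by
  rw [Finset.sum_sub_distrib, Finset.sum_sub_distrib, Finset.sum_add_distrib]
  ring

lemma cmi_core {α β γ : Type*} [Fintype α] [Fintype β] [Fintype γ]
    (r : α × β × γ → ℝ) (hr : ∀ t, 0 ≤ r t) (hr1 : ∑ t, r t = 1)
    (A : α × γ → ℝ) (B : β × γ → ℝ) (C : γ → ℝ)
    (hA : ∀ x z, A (x, z) = ∑ y, r (x, y, z))
    (hB : ∀ y z, B (y, z) = ∑ x, r (x, y, z))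
    (hC : ∀ z, C z = ∑ x, ∑ y, r (x, y, z)) :
    0 ≤ ∑ t, r t * (Real.logb 2 (r t) + Real.logb 2 (C t.2.2)
        - Real.logb 2 (A (t.1, t.2.2)) - Real.logb 2 (B t.2)) := by
  have hl2 : (0:ℝ) < Real.log 2 := Real.log_pos (by norm_num)
  have hAnn : ∀ x z, 0 ≤ A (x, z) := fun x z => by
    rw [hA]; exact Finset.sum_nonneg fun y _ => hr _
  have hBnn : ∀ y z, 0 ≤ B (y, z) := fun y z => by
    rw [hB]; exact Finset.sum_nonneg fun x _ => hr _
  have hCnn : ∀ z, 0 ≤ C z := fun z => by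
    rw [hC]; exact Finset.sum_nonneg fun x _ => Finset.sum_nonneg fun y _ => hr _
  have hrA : ∀ t : α × β × γ, r t ≤ A (t.1, t.2.2) := by
    rintro ⟨x, y, z⟩
    rw [hA]
    exact Finset.single_le_sum (f := fun y => r (x, y, z)) (fun i _ => hr _) (Finset.mem_univ y)
  have hrB : ∀ t : α × β × γ, r t ≤ B t.2 := by
    rintro ⟨x, y, z⟩
    rw [show (x,y,z).2 = (y,z) from rfl, hB]
    exact Finset.single_le_sum (f := fun x => r (x, y, z)) (fun i _ => hr _) (Finset.mem_univ x)
  have hrC : ∀ t : α × β × γ, r t ≤ C t.2.2 := by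
    rintro ⟨x, y, z⟩
    rw [hC]
    calc r (x, y, z) ≤ ∑ y, r (x, y, z) :=
          Finset.single_le_sum (f := fun y => r (x, y, z)) (fun i _ => hr _) (Finset.mem_univ y)
      _ ≤ ∑ x, ∑ y, r (x, y, z) :=
          Finset.single_le_sum (f := fun x => ∑ y, r (x, y, z))
            (fun i _ => Finset.sum_nonneg fun _ _ => hr _) (Finset.mem_univ x)
  set D : α × β × γ → ℝ := fun t =>
    if C t.2.2 = 0 then 0 else A (t.1, t.2.2) * B t.2 / C t.2.2 with hD
  have hDnn : ∀ t, 0 ≤ D t := by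
    rintro ⟨x, y, z⟩
    rw [hD]
    dsimp only
    split
    · exact le_refl 0
    · exact div_nonneg (mul_nonneg (hAnn x z) (hBnn y z)) (hCnn z)
  have step1 : ∀ t : α × β × γ, r t - D t ≤ Real.log 2 * (r t * (Real.logb 2 (r t)
      + Real.logb 2 (C t.2.2) - Real.logb 2 (A (t.1, t.2.2)) - Real.logb 2 (B t.2))) := by
    rintro ⟨x, y, z⟩
    rcases eq_or_lt_of_le (hr (x, y, z)) with h0 | hpos
    · have hd := hDnn (x, y, z)
      rw [← h0]
      simp only [zero_mul, mul_zero, zero_sub]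
      linarith
    · have hCpos : 0 < C z := lt_of_lt_of_le hpos (hrC (x, y, z))
      have hApos : 0 < A (x, z) := lt_of_lt_of_le hpos (hrA (x, y, z))
      have hBpos : 0 < B (y, z) := lt_of_lt_of_le hpos (hrB (x, y, z))
      have hDval : D (x, y, z) = A (x, z) * B (y, z) / C z := by
        rw [hD]; exact if_neg (ne_of_gt hCpos)
      rw [hDval]
      have hx : (0:ℝ) < A (x, z) * B (y, z) / (r (x, y, z) * C z) := by positivity
      have hlog := Real.log_le_sub_one_of_pos hx
      rw [Real.log_div (by positivity) (by positivity),
        Real.log_mul (ne_of_gt hApos) (ne_of_gt hBpos),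
        Real.log_mul (ne_of_gt hpos) (ne_of_gt hCpos)] at hlog
      have hrx : r (x, y, z) * (A (x, z) * B (y, z) / (r (x, y, z) * C z))
          = A (x, z) * B (y, z) / C z := by
        field_simp
      have h2 := mul_le_mul_of_nonneg_left hlog (le_of_lt hpos)
      have expand : Real.log 2 * (r (x, y, z) * (Real.logb 2 (r (x, y, z))
          + Real.logb 2 (C z) - Real.logb 2 (A (x, z)) - Real.logb 2 (B (y, z))))
          = r (x, y, z) * (Real.log (r (x, y, z)) + Real.log (C z)
            - Real.log (A (x, z)) - Real.log (B (y, z))) := by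
        simp only [Real.logb]
        have h2ne : Real.log 2 ≠ 0 := ne_of_gt hl2
        field_simp
      have h3 : r (x, y, z) * (Real.log (A (x, z)) + Real.log (B (y, z))
          - (Real.log (r (x, y, z)) + Real.log (C z))) ≤ A (x, z) * B (y, z) / C z
            - r (x, y, z) := by
        calc r (x, y, z) * (Real.log (A (x, z)) + Real.log (B (y, z))
            - (Real.log (r (x, y, z)) + Real.log (C z)))
            ≤ r (x, y, z) * (A (x, z) * B (y, z) / (r (x, y, z) * C z) - 1) := h2
          _ = A (x, z) * B (y, z) / C z - r (x, y, z) := by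
              rw [mul_sub, hrx, mul_one]
      have hneg : r (x, y, z) * (Real.log (r (x, y, z)) + Real.log (C z)
          - Real.log (A (x, z)) - Real.log (B (y, z)))
          = -(r (x, y, z) * (Real.log (A (x, z)) + Real.log (B (y, z))
            - (Real.log (r (x, y, z)) + Real.log (C z)))) := by ring
      rw [show ((x, y, z) : α × β × γ).2.2 = z from rfl, show ((x, y, z) : α × β × γ).1 = x from rfl,
        show ((x, y, z) : α × β × γ).2 = (y, z) from rfl]
      rw [expand, hneg]
      linarith
  have hprod3 : ∀ f : α × β × γ → ℝ, ∑ t, f t = ∑ x, ∑ y, ∑ z, f (x, y, z) := by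
    intro f
    rw [Fintype.sum_prod_type]
    exact Finset.sum_congr rfl fun x _ => Fintype.sum_prod_type _
  have hrot : ∀ f : α → β → γ → ℝ, ∑ x, ∑ y, ∑ z, f x y z = ∑ z, ∑ x, ∑ y, f x y z := by
    intro f
    calc ∑ x, ∑ y, ∑ z, f x y z = ∑ x, ∑ z, ∑ y, f x y z :=
          Finset.sum_congr rfl fun x _ => Finset.sum_comm
      _ = ∑ z, ∑ x, ∑ y, f x y z := Finset.sum_comm
  have hCsum : ∑ z, C z = 1 := by
    rw [← hr1, hprod3 r, hrot]
    exact Finset.sum_congr rfl fun z _ => hC z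
  have hDz : ∀ z, ∑ x, ∑ y, D (x, y, z) = if C z = 0 then 0 else C z := by
    intro z
    by_cases hz : C z = 0
    · rw [if_pos hz]
      simp [hD, hz]
    · rw [if_neg hz]
      have hDv : ∀ x y, D (x, y, z) = A (x, z) * B (y, z) / C z := fun x y => by
        rw [hD]; exact if_neg hz
      have e1 : ∑ x, A (x, z) = C z := by
        rw [hC]; exact Finset.sum_congr rfl fun x _ => hA x z
      have e2 : ∑ y, B (y, z) = C z := by
        rw [hC]
        calc ∑ y, B (y, z) = ∑ y, ∑ x, r (x, y, z) :=
              Finset.sum_congr rfl fun y _ => hB y z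
          _ = ∑ x, ∑ y, r (x, y, z) := Finset.sum_comm
      calc ∑ x, ∑ y, D (x, y, z) = ∑ x, ∑ y, A (x, z) * B (y, z) / C z :=
            Finset.sum_congr rfl fun x _ => Finset.sum_congr rfl fun y _ => hDv x y
        _ = (∑ x, A (x, z)) * (∑ y, B (y, z)) / C z := by
            rw [Finset.sum_mul_sum, Finset.sum_div]
            exact Finset.sum_congr rfl fun x _ => by rw [Finset.sum_div]
        _ = C z * C z / C z := by rw [e1, e2]
        _ = C z := by rw [mul_div_assoc, div_self hz, mul_one]
  have hDsum : ∑ t, D t ≤ 1 := by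
    rw [hprod3 D, hrot]
    calc ∑ z, ∑ x, ∑ y, D (x, y, z) = ∑ z, if C z = 0 then 0 else C z :=
          Finset.sum_congr rfl fun z _ => hDz z
      _ ≤ ∑ z, C z := Finset.sum_le_sum fun z _ => by
          split
          · exact hCnn z
          · exact le_refl _
      _ = 1 := hCsum
  have hS := Finset.sum_le_sum fun t (_ : t ∈ (Finset.univ : Finset (α × β × γ))) => step1 t
  rw [← Finset.mul_sum] at hS
  have hsub : ∑ t, (r t - D t) = 1 - ∑ t, D t := by
    rw [Finset.sum_sub_distrib, hr1]
  have hfin : Real.log 2 * 0 ≤ Real.log 2 * ∑ t, r t * (Real.logb 2 (r t)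
      + Real.logb 2 (C t.2.2) - Real.logb 2 (A (t.1, t.2.2)) - Real.logb 2 (B t.2)) := by
    rw [mul_zero]
    linarith
  exact le_of_mul_le_mul_left hfin hl2

end Core

section Nonneg
variable {Ω α β γ : Type*} [Fintype Ω] [Fintype α] [Fintype β] [Fintype γ]
  [DecidableEq α] [DecidableEq β] [DecidableEq γ]

lemma condMutualInfo_nonneg (p : Ω → ℝ) (hp : ∀ ω, 0 ≤ p ω) (hp1 : ∑ ω, p ω = 1)
    (X : Ω → α) (Y : Ω → β) (Z : Ω → γ) : 0 ≤ condMutualInfo p X Y Z := by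
  have hr : ∀ t, 0 ≤ probOf p (fun ω => (X ω, Y ω, Z ω)) t :=
    probOf_nonneg p hp _
  have hr1 : ∑ t, probOf p (fun ω => (X ω, Y ω, Z ω)) t = 1 := by
    rw [sum_probOf, hp1]
  have hA : ∀ x z, probOf p (fun ω => (X ω, Z ω)) (x, z)
      = ∑ y, probOf p (fun ω => (X ω, Y ω, Z ω)) (x, y, z) := by
    intro x z
    calc probOf p (fun ω => (X ω, Z ω)) (x, z)
        = ∑ t ∈ Finset.univ.filter (fun t : α × β × γ => (t.1, t.2.2) = (x, z)),
            probOf p (fun ω => (X ω, Y ω, Z ω)) t :=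
          probOf_comp p (fun ω => (X ω, Y ω, Z ω)) (fun t => (t.1, t.2.2)) (x, z)
      _ = ∑ y, probOf p (fun ω => (X ω, Y ω, Z ω)) (x, y, z) := by
          rw [Finset.sum_filter, Fintype.sum_prod_type]
          simp [Fintype.sum_prod_type, Prod.ext_iff, ite_and, Finset.sum_ite_eq,
            Finset.sum_ite_eq']
  have hB : ∀ y z, probOf p (fun ω => (Y ω, Z ω)) (y, z)
      = ∑ x, probOf p (fun ω => (X ω, Y ω, Z ω)) (x, y, z) := by
    intro y z
    calc probOf p (fun ω => (Y ω, Z ω)) (y, z)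
        = ∑ t ∈ Finset.univ.filter (fun t : α × β × γ => t.2 = (y, z)),
            probOf p (fun ω => (X ω, Y ω, Z ω)) t :=
          probOf_comp p (fun ω => (X ω, Y ω, Z ω)) (fun t => t.2) (y, z)
      _ = ∑ x, probOf p (fun ω => (X ω, Y ω, Z ω)) (x, y, z) := by
          rw [Finset.sum_filter, Fintype.sum_prod_type]
          simp [Fintype.sum_prod_type, Prod.ext_iff, ite_and, Finset.sum_ite_eq,
            Finset.sum_ite_eq']
  have hC : ∀ z, probOf p Z z
      = ∑ x, ∑ y, probOf p (fun ω => (X ω, Y ω, Z ω)) (x, y, z) := by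
    intro z
    calc probOf p Z z
        = ∑ t ∈ Finset.univ.filter (fun t : α × β × γ => t.2.2 = z),
            probOf p (fun ω => (X ω, Y ω, Z ω)) t :=
          probOf_comp p (fun ω => (X ω, Y ω, Z ω)) (fun t => t.2.2) z
      _ = ∑ x, ∑ y, probOf p (fun ω => (X ω, Y ω, Z ω)) (x, y, z) := by
          rw [Finset.sum_filter, Fintype.sum_prod_type]
          simp [Fintype.sum_prod_type, Prod.ext_iff, ite_and, Finset.sum_ite_eq,
            Finset.sum_ite_eq']
  have eXZ : entropy p (fun ω => (X ω, Z ω))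
      = -∑ t : α × β × γ, probOf p (fun ω => (X ω, Y ω, Z ω)) t
          * Real.logb 2 (probOf p (fun ω => (X ω, Z ω)) (t.1, t.2.2)) := by
    unfold entropy
    congr 1
    exact sum_probOf_comp_mul p (fun ω => (X ω, Y ω, Z ω)) (fun t => (t.1, t.2.2))
      (fun s => Real.logb 2 (probOf p (fun ω => (X ω, Z ω)) s))
  have eYZ : entropy p (fun ω => (Y ω, Z ω))
      = -∑ t : α × β × γ, probOf p (fun ω => (X ω, Y ω, Z ω)) t
          * Real.logb 2 (probOf p (fun ω => (Y ω, Z ω)) t.2) := by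
    unfold entropy
    congr 1
    exact sum_probOf_comp_mul p (fun ω => (X ω, Y ω, Z ω)) (fun t => t.2)
      (fun s => Real.logb 2 (probOf p (fun ω => (Y ω, Z ω)) s))
  have eZ : entropy p Z
      = -∑ t : α × β × γ, probOf p (fun ω => (X ω, Y ω, Z ω)) t
          * Real.logb 2 (probOf p Z t.2.2) := by
    unfold entropy
    congr 1
    exact sum_probOf_comp_mul p (fun ω => (X ω, Y ω, Z ω)) (fun t => t.2.2)
      (fun s => Real.logb 2 (probOf p Z s))
  have eT : entropy p (fun ω => (X ω, Y ω, Z ω))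
      = -∑ t : α × β × γ, probOf p (fun ω => (X ω, Y ω, Z ω)) t
          * Real.logb 2 (probOf p (fun ω => (X ω, Y ω, Z ω)) t) := rfl
  unfold condMutualInfo
  rw [eXZ, eYZ, eZ, eT, sum4]
  have hcore := cmi_core (probOf p (fun ω => (X ω, Y ω, Z ω))) hr hr1
    (probOf p (fun ω => (X ω, Z ω))) (probOf p (fun ω => (Y ω, Z ω))) (probOf p Z)
    hA hB hC
  refine le_trans hcore (le_of_eq ?_)
  exact Finset.sum_congr rfl fun t _ => by ring

end Nonneg

section MI
variable {Ω α β : Type*} [Fintype Ω] [Fintype α] [Fintype β] [DecidableEq α] [DecidableEq β]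

lemma entropy_unit (p : Ω → ℝ) (hp1 : ∑ ω, p ω = 1) :
    entropy p (fun _ : Ω => (() : Unit)) = 0 := by
  unfold entropy probOf
  simp [hp1]

lemma mutualInfo_nonneg (p : Ω → ℝ) (hp : ∀ ω, 0 ≤ p ω) (hp1 : ∑ ω, p ω = 1)
    (X : Ω → α) (Y : Ω → β) : 0 ≤ mutualInfo p X Y := by
  have h := condMutualInfo_nonneg p hp hp1 X Y (fun _ => (() : Unit))
  unfold condMutualInfo at h
  have e1 : entropy p (fun ω => (X ω, ())) = entropy p X :=
    entropy_congr p (fun x => (x, ())) (fun a b hab => congrArg Prod.fst hab) (fun ω => rfl)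
  have e2 : entropy p (fun ω => (Y ω, ())) = entropy p Y :=
    entropy_congr p (fun x => (x, ())) (fun a b hab => congrArg Prod.fst hab) (fun ω => rfl)
  have e3 : entropy p (fun ω => (X ω, Y ω, ())) = entropy p (fun ω => (X ω, Y ω)) :=
    entropy_congr p (fun s : α × β => (s.1, s.2, ()))
      (fun a b hab => by
        obtain ⟨a1, a2⟩ := a; obtain ⟨b1, b2⟩ := b
        simpa [Prod.ext_iff] using hab)
      (fun ω => rfl)
  rw [e1, e2, e3, entropy_unit p hp1] at h
  unfold mutualInfo
  linarith

end MI

section Aux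
variable {Ω α β γ δ ε : Type*} [Fintype Ω] [Fintype α] [Fintype β] [Fintype γ]
  [Fintype δ] [Fintype ε]
  [DecidableEq α] [DecidableEq β] [DecidableEq γ] [DecidableEq δ] [DecidableEq ε]

lemma chaining_aux (p : Ω → ℝ) (hp : ∀ ω, 0 ≤ p ω) (hp1 : ∑ ω, p ω = 1)
    (A : Ω → α) (B : Ω → β) (W : Ω → γ) (m : Ω → δ) (v : Ω → ε)
    (hM : condMutualInfo p (fun ω => (A ω, B ω)) (fun ω => (m ω, v ω)) W = 0) :
    mutualInfo p (fun ω => (A ω, m ω)) (fun ω => (B ω, v ω)) ≤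
      mutualInfo p A (fun ω => (B ω, W ω)) + mutualInfo p m v
        + mutualInfo p W (fun ω => (A ω, B ω)) := by
  have n1 := mutualInfo_nonneg p hp hp1 B v
  have n2 := mutualInfo_nonneg p hp hp1 A m
  have n3 := condMutualInfo_nonneg p hp hp1 A W B
  have n4 := condMutualInfo_nonneg p hp hp1 B W (fun ω => (m ω, v ω))
  have n5 := condMutualInfo_nonneg p hp hp1 A W (fun ω => (B ω, (m ω, v ω)))
  -- recodings
  have c1 : entropy p (fun ω => ((A ω, m ω), (B ω, v ω)))
      = entropy p (fun ω => (A ω, (B ω, (m ω, v ω)))) := by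
    refine entropy_congr p (X := fun ω => (A ω, (B ω, (m ω, v ω))))
      (X' := fun ω => ((A ω, m ω), (B ω, v ω)))
      (fun s : α × β × δ × ε => ((s.1, s.2.2.1), (s.2.1, s.2.2.2))) ?_ (fun ω => rfl)
    rintro ⟨a, b, d, e⟩ ⟨a', b', d', e'⟩ h
    simp only [Prod.mk.injEq] at h ⊢
    tauto
  have c2 : entropy p (fun ω => (B ω, W ω)) = entropy p (fun ω => (W ω, B ω)) := by
    refine entropy_congr p (X := fun ω => (W ω, B ω)) (X' := fun ω => (B ω, W ω))
      (fun s : γ × β => (s.2, s.1)) ?_ (fun ω => rfl)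
    rintro ⟨a, b⟩ ⟨a', b'⟩ h
    simp only [Prod.mk.injEq] at h ⊢
    tauto
  have c3 : entropy p (fun ω => (A ω, (B ω, W ω)))
      = entropy p (fun ω => (A ω, (W ω, B ω))) := by
    refine entropy_congr p (X := fun ω => (A ω, (W ω, B ω)))
      (X' := fun ω => (A ω, (B ω, W ω)))
      (fun s : α × γ × β => (s.1, (s.2.2, s.2.1))) ?_ (fun ω => rfl)
    rintro ⟨a, b, c⟩ ⟨a', b', c'⟩ h
    simp only [Prod.mk.injEq] at h ⊢
    tauto
  have c4 : entropy p (fun ω => (W ω, (A ω, B ω)))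
      = entropy p (fun ω => (A ω, (W ω, B ω))) := by
    refine entropy_congr p (X := fun ω => (A ω, (W ω, B ω)))
      (X' := fun ω => (W ω, (A ω, B ω)))
      (fun s : α × γ × β => (s.2.1, (s.1, s.2.2))) ?_ (fun ω => rfl)
    rintro ⟨a, b, c⟩ ⟨a', b', c'⟩ h
    simp only [Prod.mk.injEq] at h ⊢
    tauto
  have c5 : entropy p (fun ω => ((A ω, B ω), W ω))
      = entropy p (fun ω => (A ω, (W ω, B ω))) := by
    refine entropy_congr p (X := fun ω => (A ω, (W ω, B ω)))
      (X' := fun ω => ((A ω, B ω), W ω))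
      (fun s : α × γ × β => ((s.1, s.2.2), s.2.1)) ?_ (fun ω => rfl)
    rintro ⟨a, b, c⟩ ⟨a', b', c'⟩ h
    simp only [Prod.mk.injEq] at h ⊢
    tauto
  have c6 : entropy p (fun ω => ((m ω, v ω), W ω))
      = entropy p (fun ω => (W ω, (m ω, v ω))) := by
    refine entropy_congr p (X := fun ω => (W ω, (m ω, v ω)))
      (X' := fun ω => ((m ω, v ω), W ω))
      (fun s : γ × δ × ε => ((s.2.1, s.2.2), s.1)) ?_ (fun ω => rfl)
    rintro ⟨a, b, c⟩ ⟨a', b', c'⟩ h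
    simp only [Prod.mk.injEq] at h ⊢
    tauto
  have c7 : entropy p (fun ω => ((A ω, B ω), ((m ω, v ω), W ω)))
      = entropy p (fun ω => (A ω, (W ω, (B ω, (m ω, v ω))))) := by
    refine entropy_congr p (X := fun ω => (A ω, (W ω, (B ω, (m ω, v ω)))))
      (X' := fun ω => ((A ω, B ω), ((m ω, v ω), W ω)))
      (fun s : α × γ × β × δ × ε => ((s.1, s.2.2.1), ((s.2.2.2.1, s.2.2.2.2), s.2.1)))
      ?_ (fun ω => rfl)
    rintro ⟨a, b, c, d, e⟩ ⟨a', b', c', d', e'⟩ h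
    simp only [Prod.mk.injEq] at h ⊢
    tauto
  have c8 : entropy p (fun ω => (B ω, (W ω, (m ω, v ω))))
      = entropy p (fun ω => (W ω, (B ω, (m ω, v ω)))) := by
    refine entropy_congr p (X := fun ω => (W ω, (B ω, (m ω, v ω))))
      (X' := fun ω => (B ω, (W ω, (m ω, v ω))))
      (fun s : γ × β × δ × ε => (s.2.1, (s.1, s.2.2))) ?_ (fun ω => rfl)
    rintro ⟨a, b, c⟩ ⟨a', b', c'⟩ h
    simp only [Prod.mk.injEq] at h ⊢
    tauto
  unfold mutualInfo condMutualInfo at *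
  rw [c5, c6, c7] at hM
  rw [c8] at n4
  rw [c2, c3, c4, c1]
  linarith

end Aux

/-- one step of the chaining bound: if
`I((M^{k-1}, Z^{k-1}); (M_k, E_k, Z_k) | E_{k-1}) = 0`, then
`I(M^k; (Z^k, E_k)) ≤ I(M^{k-1}; (Z^{k-1}, E_{k-1})) + I(M_k; (E_k, Z_k))
  + I(E_{k-1}; (M^{k-1}, Z^{k-1}))`. -/
theorem chaining_single_step {Ω α₁ α₂ : Type*} [Fintype Ω]
    [Fintype α₁] [DecidableEq α₁] [Fintype α₂] [DecidableEq α₂]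
    (p : Ω → ℝ) (hp : ∀ ω, 0 ≤ p ω) (hp1 : ∑ ω, p ω = 1)
    (k : ℕ) (hk : 2 ≤ k) (β γ : Fin k → Type*)
    [∀ i, Fintype (β i)] [∀ i, DecidableEq (β i)]
    [∀ i, Fintype (γ i)] [∀ i, DecidableEq (γ i)]
    (Ekm1 : Ω → α₁) (Ek : Ω → α₂)
    (M : (i : Fin k) → Ω → β i) (Z : (i : Fin k) → Ω → γ i)
    (hMarkov : condMutualInfo p
      (fun ω => ((fun i : {i : Fin k // i.val < k - 1} => M i.1 ω),
                 (fun i : {i : Fin k // i.val < k - 1} => Z i.1 ω)))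
      (fun ω => (M ⟨k - 1, by omega⟩ ω, Ek ω, Z ⟨k - 1, by omega⟩ ω))
      Ekm1 = 0) :
    mutualInfo p (fun ω => (fun i : Fin k => M i ω))
        (fun ω => ((fun i : Fin k => Z i ω), Ek ω)) ≤
      mutualInfo p (fun ω => (fun i : {i : Fin k // i.val < k - 1} => M i.1 ω))
        (fun ω => ((fun i : {i : Fin k // i.val < k - 1} => Z i.1 ω), Ekm1 ω)) +
      mutualInfo p (M ⟨k - 1, by omega⟩)
        (fun ω => (Ek ω, Z ⟨k - 1, by omega⟩ ω)) +
      mutualInfo p Ekm1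
        (fun ω => ((fun i : {i : Fin k // i.val < k - 1} => M i.1 ω),
                   (fun i : {i : Fin k // i.val < k - 1} => Z i.1 ω))) := by
  have hkk : k - 1 < k := by omega
  have g1 : entropy p (fun ω => (fun i : Fin k => M i ω))
      = entropy p (fun ω => ((fun i : {i : Fin k // i.val < k - 1} => M i.1 ω),
          M ⟨k - 1, hkk⟩ ω)) := by
    refine (entropy_congr p (X := fun ω => (fun i : Fin k => M i ω))
      (X' := fun ω => ((fun i : {i : Fin k // i.val < k - 1} => M i.1 ω), M ⟨k - 1, hkk⟩ ω))
      (fun g => ((fun i : {i : Fin k // i.val < k - 1} => g i.1), g ⟨k - 1, hkk⟩))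
      ?_ (fun ω => rfl)).symm
    intro g g' h
    have h1 := congrArg Prod.fst h
    have h2 := congrArg Prod.snd h
    simp only at h1 h2
    funext i
    by_cases hi : i.val < k - 1
    · exact congrFun h1 ⟨i, hi⟩
    · have hieq : i = ⟨k - 1, hkk⟩ := by
        apply Fin.ext
        have := i.isLt
        simp only
        omega
      rw [hieq]
      exact h2
  have g2 : entropy p (fun ω => ((fun i : Fin k => Z i ω), Ek ω))
      = entropy p (fun ω => ((fun i : {i : Fin k // i.val < k - 1} => Z i.1 ω),
          (Ek ω, Z ⟨k - 1, hkk⟩ ω))) := by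
    refine (entropy_congr p (X := fun ω => ((fun i : Fin k => Z i ω), Ek ω))
      (X' := fun ω => ((fun i : {i : Fin k // i.val < k - 1} => Z i.1 ω),
        (Ek ω, Z ⟨k - 1, hkk⟩ ω)))
      (fun s => ((fun i : {i : Fin k // i.val < k - 1} => s.1 i.1), (s.2, s.1 ⟨k - 1, hkk⟩)))
      ?_ (fun ω => rfl)).symm
    rintro ⟨g, a⟩ ⟨g', a'⟩ h
    simp only [Prod.mk.injEq] at h ⊢
    obtain ⟨h1, h2, h3⟩ := h
    refine ⟨?_, h2⟩
    funext i
    by_cases hi : i.val < k - 1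
    · exact congrFun h1 ⟨i, hi⟩
    · have hieq : i = ⟨k - 1, hkk⟩ := by
        apply Fin.ext
        have := i.isLt
        simp only
        omega
      rw [hieq]
      exact h3
  have g3 : entropy p (fun ω => ((fun i : Fin k => M i ω), ((fun i : Fin k => Z i ω), Ek ω)))
      = entropy p (fun ω => (((fun i : {i : Fin k // i.val < k - 1} => M i.1 ω),
            M ⟨k - 1, hkk⟩ ω),
          ((fun i : {i : Fin k // i.val < k - 1} => Z i.1 ω),
            (Ek ω, Z ⟨k - 1, hkk⟩ ω)))) := by
    refine (entropy_congr p
      (X := fun ω => ((fun i : Fin k => M i ω), ((fun i : Fin k => Z i ω), Ek ω)))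
      (X' := fun ω => (((fun i : {i : Fin k // i.val < k - 1} => M i.1 ω), M ⟨k - 1, hkk⟩ ω),
          ((fun i : {i : Fin k // i.val < k - 1} => Z i.1 ω), (Ek ω, Z ⟨k - 1, hkk⟩ ω))))
      (fun s => (((fun i : {i : Fin k // i.val < k - 1} => s.1 i.1), s.1 ⟨k - 1, hkk⟩),
        ((fun i : {i : Fin k // i.val < k - 1} => s.2.1 i.1), (s.2.2, s.2.1 ⟨k - 1, hkk⟩))))
      ?_ (fun ω => rfl)).symm
    rintro ⟨gm, gz, a⟩ ⟨gm', gz', a'⟩ h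
    simp only [Prod.mk.injEq] at h ⊢
    obtain ⟨⟨h1, h2⟩, h3, h4, h5⟩ := h
    refine ⟨?_, ?_, h4⟩
    · funext i
      by_cases hi : i.val < k - 1
      · exact congrFun h1 ⟨i, hi⟩
      · have hieq : i = ⟨k - 1, hkk⟩ := by
          apply Fin.ext
          have := i.isLt
          simp only
          omega
        rw [hieq]
        exact h2
    · funext i
      by_cases hi : i.val < k - 1
      · exact congrFun h3 ⟨i, hi⟩
      · have hieq : i = ⟨k - 1, hkk⟩ := by
          apply Fin.ext
          have := i.isLt
          simp only
          omega
        rw [hieq]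
        exact h5
  have eL : mutualInfo p (fun ω => (fun i : Fin k => M i ω))
        (fun ω => ((fun i : Fin k => Z i ω), Ek ω))
      = mutualInfo p
        (fun ω => ((fun i : {i : Fin k // i.val < k - 1} => M i.1 ω), M ⟨k - 1, hkk⟩ ω))
        (fun ω => ((fun i : {i : Fin k // i.val < k - 1} => Z i.1 ω),
          (Ek ω, Z ⟨k - 1, hkk⟩ ω))) := by
    unfold mutualInfo
    rw [g1, g2, g3]
  refine le_trans (le_of_eq eL) ?_
  exact chaining_aux p hp hp1
    (fun ω => (fun i : {i : Fin k // i.val < k - 1} => M i.1 ω))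
    (fun ω => (fun i : {i : Fin k // i.val < k - 1} => Z i.1 ω))
    Ekm1 (M ⟨k - 1, hkk⟩) (fun ω => (Ek ω, Z ⟨k - 1, hkk⟩ ω)) hMarkov
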